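/- Define on [0,1] the kernels Π₀(x,x') = (1/π)(π − ψ(x,x')) and Π₁(x,x') = (1/π)((1 + x x')(π − ψ(x,x')) + |x − x'|), where ψ(x,x') = arccos((1 + x x')/√((1 + x²)(1 + x'²))). Then Π₀ and Π₁ are positive definite on [0,1]: for any n pairwise distinct points x₁,…,xₙ ∈ [0,1], the Gram matrices (Π₀(x_i,x_j))_{1≤i,j≤n} and (Π₁(x_i,x_j))_{1≤i,j≤n} are positive definite. -/

import Mathlib

open Real

/-- The angle `ψ(x,x') = arccos((1 + x x')/√((1 + x²)(1 + x'²)))` on `ℝ`. -/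
noncomputable def ntkPsi1 (x x' : ℝ) : ℝ :=
  Real.arccos ((1 + x * x') / Real.sqrt ((1 + x ^ 2) * (1 + x' ^ 2)))

/-- The arc-cosine kernel of degree 0 on `[0,1]`: `Π₀(x,x') = (1/π)(π − ψ(x,x'))`. -/
noncomputable def Pi0 (x x' : ℝ) : ℝ := (1 / π) * (π - ntkPsi1 x x')

/-- The arc-cosine kernel of degree 1 on `[0,1]`:
`Π₁(x,x') = (1/π)((1 + x x')(π − ψ(x,x')) + |x − x'|)`. -/
noncomputable def Pi1 (x x' : ℝ) : ℝ :=
  (1 / π) * ((1 + x * x') * (π - ntkPsi1 x x') + |x - x'|)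

open Real MeasureTheory Set intervalIntegral Matrix

lemma psi_eq (x x' : ℝ) : ntkPsi1 x x' = |arctan x - arctan x'| := by
  have h1 : (0:ℝ) < 1 + x^2 := by positivity
  have h2 : (0:ℝ) < 1 + x'^2 := by positivity
  have hc : Real.cos (arctan x - arctan x') =
      (1 + x * x') / Real.sqrt ((1 + x ^ 2) * (1 + x' ^ 2)) := by
    rw [Real.cos_sub, Real.cos_arctan, Real.sin_arctan, Real.cos_arctan, Real.sin_arctan,
      Real.sqrt_mul h1.le]
    have hs1 : Real.sqrt (1 + x^2) ≠ 0 := by positivity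
    have hs2 : Real.sqrt (1 + x'^2) ≠ 0 := by positivity
    field_simp
  have habs : |arctan x - arctan x'| ≤ π := by
    have hx1 := Real.arctan_mem_Ioo x
    have hx2 := Real.arctan_mem_Ioo x'
    rw [abs_sub_le_iff]
    constructor <;> nlinarith [hx1.1, hx1.2, hx2.1, hx2.2, Real.pi_pos]
  rw [ntkPsi1, ← hc, ← Real.cos_abs]
  exact Real.arccos_cos (abs_nonneg _) habs

lemma lin_eq (x φ : ℝ) : Real.cos φ + x * Real.sin φ = Real.sqrt (1+x^2) * Real.cos (φ - arctan x) := by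
  have h1 : (0:ℝ) < 1 + x^2 := by positivity
  have hs1 : Real.sqrt (1 + x^2) ≠ 0 := by positivity
  rw [Real.cos_sub, Real.cos_arctan, Real.sin_arctan]
  field_simp

lemma arctan_mem (x : ℝ) (hx : x ∈ Icc (0:ℝ) 1) : arctan x ∈ Icc (0:ℝ) (π/4) := by
  constructor
  · simpa using Real.arctan_strictMono.monotone hx.1
  · have := Real.arctan_strictMono.monotone hx.2
    simpa [Real.arctan_one] using this

lemma pos_iff (x : ℝ) (hx : x ∈ Icc (0:ℝ) 1) (φ : ℝ) (hφ : φ ∈ Icc (-(π/2)) (3*π/2)) :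
    (0 < Real.cos φ + x * Real.sin φ) ↔ (arctan x - π/2 < φ ∧ φ < arctan x + π/2) := by
  have ht := arctan_mem x hx
  have hpi := Real.pi_pos
  set t := arctan x with hts
  have h1 : (0:ℝ) < 1 + x^2 := by positivity
  have hs1 : (0:ℝ) < Real.sqrt (1 + x^2) := Real.sqrt_pos.2 h1
  rw [lin_eq, mul_pos_iff_of_pos_left hs1]
  constructor
  · intro h
    by_contra hcon
    push_neg at hcon
    rcases le_or_gt φ (t - π/2) with h2 | h2
    · have : Real.cos (t - φ) ≤ 0 := by
        apply Real.cos_nonpos_of_pi_div_two_le_of_le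
        · linarith
        · have := hφ.1; linarith [ht.2]
      rw [show t - φ = -(φ - t) by ring, Real.cos_neg] at this
      linarith
    · have h3 := hcon h2
      have : Real.cos (φ - t) ≤ 0 := by
        apply Real.cos_nonpos_of_pi_div_two_le_of_le
        · linarith
        · have := hφ.2; linarith [ht.1]
      linarith
  · intro ⟨h2, h3⟩
    exact Real.cos_pos_of_mem_Ioo ⟨by linarith, by linarith⟩

lemma nonneg_cos (x : ℝ) (t φ : ℝ) (h1 : t - π/2 ≤ φ) (h2 : φ ≤ t + π/2) :
    0 ≤ Real.cos (φ - t) :=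
  Real.cos_nonneg_of_mem_Icc ⟨by linarith, by linarith⟩

noncomputable def G0 (x φ : ℝ) : ℝ := if 0 < Real.cos φ + x * Real.sin φ then 1 else 0

lemma G0_meas (x : ℝ) : Measurable (G0 x) := by
  unfold G0
  exact Measurable.ite (measurableSet_lt measurable_const (by fun_prop)) measurable_const
    measurable_const

lemma G0_bd (x φ : ℝ) : G0 x φ ∈ Icc (0:ℝ) 1 := by
  unfold G0; split <;> simp

lemma intInt_G0 (x x' a b : ℝ) :
    IntervalIntegrable (fun φ => G0 x φ * G0 x' φ) volume a b := by
  rw [intervalIntegrable_iff]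
  haveI : IsFiniteMeasure (volume.restrict (Set.uIoc a b)) :=
    ⟨by rw [Measure.restrict_apply_univ]; exact measure_Ioc_lt_top⟩
  apply Integrable.mono' (integrable_const (1:ℝ))
  · exact ((G0_meas x).mul (G0_meas x')).aestronglyMeasurable.restrict
  · filter_upwards with φ
    have h1 := G0_bd x φ; have h2 := G0_bd x' φ
    rw [Real.norm_eq_abs, abs_mul, abs_of_nonneg h1.1, abs_of_nonneg h2.1]
    nlinarith [h1.2, h2.2, h1.1, h2.1]

lemma int_G0 (x x' : ℝ) (hx : x ∈ Icc (0:ℝ) 1) (hx' : x' ∈ Icc (0:ℝ) 1) (hle : x' ≤ x) :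
    ∫ φ in (-(π/2))..(3*π/2), G0 x φ * G0 x' φ = π - (arctan x - arctan x') := by
  have hpi := Real.pi_pos
  have ht := arctan_mem x hx
  have ht' := arctan_mem x' hx'
  have hst : arctan x' ≤ arctan x := Real.arctan_strictMono.monotone hle
  set t := arctan x
  set s := arctan x'
  have hord1 : -(π/2) ≤ t - π/2 := by linarith [ht.1]
  have hord2 : t - π/2 ≤ s + π/2 := by linarith [ht.2, ht'.1]
  have hord3 : s + π/2 ≤ 3*π/2 := by linarith [ht'.2]
  have h1 : ∫ φ in (-(π/2))..(t - π/2), G0 x φ * G0 x' φ = 0 := by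
    rw [intervalIntegral.integral_congr (g := fun _ => (0:ℝ))]
    · simp
    · intro φ hφ
      rw [Set.uIcc_of_le hord1] at hφ
      have hmem : φ ∈ Icc (-(π/2)) (3*π/2) := ⟨hφ.1, by linarith [hφ.2]⟩
      have : ¬ (0 < Real.cos φ + x * Real.sin φ) := by
        rw [pos_iff x hx φ hmem]
        intro h
        linarith [h.1, hφ.2]
      simp [G0, this]
  have h3 : ∫ φ in (s + π/2)..(3*π/2), G0 x φ * G0 x' φ = 0 := by
    rw [intervalIntegral.integral_congr (g := fun _ => (0:ℝ))]
    · simp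
    · intro φ hφ
      rw [Set.uIcc_of_le hord3] at hφ
      have hmem : φ ∈ Icc (-(π/2)) (3*π/2) := ⟨by linarith [hφ.1], hφ.2⟩
      have : ¬ (0 < Real.cos φ + x' * Real.sin φ) := by
        rw [pos_iff x' hx' φ hmem]
        intro h
        linarith [h.2, hφ.1]
      simp [G0, this]
  have h2 : ∫ φ in (t - π/2)..(s + π/2), G0 x φ * G0 x' φ = π - (t - s) := by
    rw [intervalIntegral.integral_of_le hord2, MeasureTheory.integral_Ioc_eq_integral_Ioo,
      MeasureTheory.setIntegral_congr_fun measurableSet_Ioo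
        (g := fun _ => (1:ℝ)) ?_]
    · simp [Real.volume_Ioo]
      rw [max_eq_left (by linarith)]
      ring
    · intro φ hφ
      have hmem : φ ∈ Icc (-(π/2)) (3*π/2) := ⟨by linarith [hφ.1], by linarith [hφ.2]⟩
      have e1 : 0 < Real.cos φ + x * Real.sin φ := by
        rw [pos_iff x hx φ hmem]
        exact ⟨hφ.1, by linarith [hφ.2]⟩
      have e2 : 0 < Real.cos φ + x' * Real.sin φ := by
        rw [pos_iff x' hx' φ hmem]
        exact ⟨by linarith [hφ.1], hφ.2⟩
      simp [G0, e1, e2]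
  have c1 := intervalIntegral.integral_add_adjacent_intervals
    (intInt_G0 x x' (-(π/2)) (t - π/2)) (intInt_G0 x x' (t - π/2) (s + π/2))
  have c2 := intervalIntegral.integral_add_adjacent_intervals
    (intInt_G0 x x' (-(π/2)) (s + π/2)) (intInt_G0 x x' (s + π/2) (3*π/2))
  rw [← c2, ← c1, h1, h2, h3]
  ring

noncomputable def G1 (x φ : ℝ) : ℝ := max 0 (Real.cos φ + x * Real.sin φ)

lemma G1_cont (x : ℝ) : Continuous (G1 x) := by
  unfold G1; fun_prop

lemma sin2at (x : ℝ) : Real.sin (2 * arctan x) = 2*x/(1+x^2) := by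
  have h : Real.sqrt (1+x^2) * Real.sqrt (1+x^2) = 1+x^2 :=
    Real.mul_self_sqrt (by positivity)
  have h0 : (0:ℝ) < 1 + x^2 := by positivity
  have hs : Real.sqrt (1+x^2) ≠ 0 := by positivity
  rw [Real.sin_two_mul, Real.sin_arctan, Real.cos_arctan]
  field_simp
  rw [Real.sq_sqrt h0.le]

lemma cos2at (x : ℝ) : Real.cos (2 * arctan x) = (1-x^2)/(1+x^2) := by
  have h : Real.sqrt (1+x^2) * Real.sqrt (1+x^2) = 1+x^2 :=
    Real.mul_self_sqrt (by positivity)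
  have h0 : (0:ℝ) < 1 + x^2 := by positivity
  have hs : Real.sqrt (1+x^2) ≠ 0 := by positivity
  rw [Real.cos_two_mul, Real.cos_arctan]
  rw [div_pow, one_pow, Real.sq_sqrt h0.le]
  field_simp
  ring

lemma hderivH (x x' φ : ℝ) :
    HasDerivAt (fun φ => (1+x*x')*φ/2 + ((1-x*x')*Real.sin (2*φ)/4 - (x+x')*Real.cos (2*φ)/4))
      ((Real.cos φ + x * Real.sin φ) * (Real.cos φ + x' * Real.sin φ)) φ := by
  have A : HasDerivAt (fun φ:ℝ => 2*φ) 2 φ := by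
    simpa using (hasDerivAt_id φ).const_mul 2
  have hS := A.sin
  have hC := A.cos
  have hid := hasDerivAt_id φ
  have H := (((hid.const_mul ((1+x*x'))).div_const 2).add
    (((hS.const_mul ((1-x*x'))).div_const 4).sub ((hC.const_mul ((x+x'))).div_const 4)))
  refine H.congr_deriv ?_
  rw [Real.cos_two_mul, Real.sin_two_mul]
  have hsc := Real.sin_sq_add_cos_sq φ
  linear_combination (-(x*x')) * hsc

lemma intInt_G1 (x x' a b : ℝ) :
    IntervalIntegrable (fun φ => G1 x φ * G1 x' φ) volume a b :=
  ((G1_cont x).mul (G1_cont x')).intervalIntegrable a b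

lemma int_G1 (x x' : ℝ) (hx : x ∈ Icc (0:ℝ) 1) (hx' : x' ∈ Icc (0:ℝ) 1) (hle : x' ≤ x) :
    ∫ φ in (-(π/2))..(3*π/2), G1 x φ * G1 x' φ
      = ((1+x*x') * (π - (arctan x - arctan x')) + (x - x'))/2 := by
  have hpi := Real.pi_pos
  have ht := arctan_mem x hx
  have ht' := arctan_mem x' hx'
  have hst : arctan x' ≤ arctan x := Real.arctan_strictMono.monotone hle
  have hord1 : -(π/2) ≤ arctan x - π/2 := by linarith [ht.1]
  have hord2 : arctan x - π/2 ≤ arctan x' + π/2 := by linarith [ht.2, ht'.1]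
  have hord3 : arctan x' + π/2 ≤ 3*π/2 := by linarith [ht'.2]
  have h1 : ∫ φ in (-(π/2))..(arctan x - π/2), G1 x φ * G1 x' φ = 0 := by
    rw [intervalIntegral.integral_congr (g := fun _ => (0:ℝ))]
    · simp
    · intro φ hφ
      rw [Set.uIcc_of_le hord1] at hφ
      have hmem : φ ∈ Icc (-(π/2)) (3*π/2) := ⟨hφ.1, by linarith [hφ.2]⟩
      have : ¬ (0 < Real.cos φ + x * Real.sin φ) := by
        rw [pos_iff x hx φ hmem]
        intro h
        linarith [h.1, hφ.2]
      simp only [G1, max_eq_left (le_of_not_gt this), zero_mul]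
  have h3 : ∫ φ in (arctan x' + π/2)..(3*π/2), G1 x φ * G1 x' φ = 0 := by
    rw [intervalIntegral.integral_congr (g := fun _ => (0:ℝ))]
    · simp
    · intro φ hφ
      rw [Set.uIcc_of_le hord3] at hφ
      have hmem : φ ∈ Icc (-(π/2)) (3*π/2) := ⟨by linarith [hφ.1], hφ.2⟩
      have : ¬ (0 < Real.cos φ + x' * Real.sin φ) := by
        rw [pos_iff x' hx' φ hmem]
        intro h
        linarith [h.2, hφ.1]
      simp only [G1, max_eq_left (le_of_not_gt this), mul_zero]
  have h2 : ∫ φ in (arctan x - π/2)..(arctan x' + π/2), G1 x φ * G1 x' φ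
      = ((1+x*x') * (π - (arctan x - arctan x')) + (x - x'))/2 := by
    rw [intervalIntegral.integral_congr
      (g := fun φ => (Real.cos φ + x * Real.sin φ) * (Real.cos φ + x' * Real.sin φ))]
    · rw [intervalIntegral.integral_eq_sub_of_hasDerivAt
        (f := fun φ => (1+x*x')*φ/2 +
          ((1-x*x')*Real.sin (2*φ)/4 - (x+x')*Real.cos (2*φ)/4))
        (fun φ _ => hderivH x x' φ)
        (((continuous_cos.add (continuous_const.mul continuous_sin)).mul
          (continuous_cos.add (continuous_const.mul continuous_sin))).intervalIntegrable _ _)]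
      rw [show 2*(arctan x' + π/2) = 2*arctan x' + π by ring,
        show 2*(arctan x - π/2) = 2*arctan x - π by ring,
        Real.sin_add_pi, Real.cos_add_pi, Real.sin_sub_pi, Real.cos_sub_pi,
        sin2at, cos2at, sin2at, cos2at]
      have d1 : (0:ℝ) < 1 + x^2 := by positivity
      have d2 : (0:ℝ) < 1 + x'^2 := by positivity
      field_simp
      ring
    · intro φ hφ
      rw [Set.uIcc_of_le hord2] at hφ
      have e1 : 0 ≤ Real.cos φ + x * Real.sin φ := by
        rw [lin_eq]
        have : 0 ≤ Real.cos (φ - arctan x) :=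
          nonneg_cos x (arctan x) φ (by linarith [hφ.1]) (by linarith [hφ.2, hst])
        positivity
      have e2 : 0 ≤ Real.cos φ + x' * Real.sin φ := by
        rw [lin_eq]
        have : 0 ≤ Real.cos (φ - arctan x') :=
          nonneg_cos x' (arctan x') φ (by linarith [hφ.1, hst]) (by linarith [hφ.2])
        positivity
      simp only [G1, max_eq_right e1, max_eq_right e2]
  have c1 := intervalIntegral.integral_add_adjacent_intervals
    (intInt_G1 x x' (-(π/2)) (arctan x - π/2)) (intInt_G1 x x' (arctan x - π/2) (arctan x' + π/2))
  have c2 := intervalIntegral.integral_add_adjacent_intervals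
    (intInt_G1 x x' (-(π/2)) (arctan x' + π/2)) (intInt_G1 x x' (arctan x' + π/2) (3*π/2))
  rw [← c2, ← c1, h1, h2, h3]
  ring

lemma quad (n : ℕ) (f : Fin n → ℝ → ℝ) (a : Fin n → ℝ) (lo hi : ℝ)
    (hint : ∀ i j, IntervalIntegrable (fun φ => f i φ * f j φ) volume lo hi) :
    ∑ i, ∑ j, a i * a j * (∫ φ in lo..hi, f i φ * f j φ)
      = ∫ φ in lo..hi, (∑ i, a i * f i φ)^2 := by
  have hint' : ∀ i j, IntervalIntegrable (fun φ => (a i * f i φ) * (a j * f j φ)) volume lo hi := by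
    intro i j
    have : (fun φ => (a i * f i φ) * (a j * f j φ))
        = fun φ => (a i * a j) * (f i φ * f j φ) := by ext φ; ring
    rw [this]
    exact (hint i j).const_mul _
  have h1 : ∀ i j, a i * a j * (∫ φ in lo..hi, f i φ * f j φ)
      = ∫ φ in lo..hi, (a i * f i φ) * (a j * f j φ) := by
    intro i j
    rw [← intervalIntegral.integral_const_mul]
    congr 1; ext φ; ring
  simp_rw [h1]
  have h2 : ∀ i, ∑ j, ∫ φ in lo..hi, (a i * f i φ) * (a j * f j φ)
      = ∫ φ in lo..hi, ∑ j, (a i * f i φ) * (a j * f j φ) := by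
    intro i
    rw [intervalIntegral.integral_finset_sum]
    exact fun j _ => hint' i j
  simp_rw [h2]
  have hsum_int : ∀ i : Fin n,
      IntervalIntegrable (fun φ => ∑ j, a i * f i φ * (a j * f j φ)) volume lo hi := by
    intro i
    have hh := IntervalIntegrable.sum (μ := volume) (a := lo) (b := hi) Finset.univ
      (f := fun j => fun φ => a i * f i φ * (a j * f j φ)) (fun j _ => hint' i j)
    have he : (∑ j : Fin n, fun φ => a i * f i φ * (a j * f j φ))
        = fun φ => ∑ j, a i * f i φ * (a j * f j φ) := by
      ext φ; simp [Finset.sum_apply]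
    rwa [he] at hh
  have h3 := intervalIntegral.integral_finset_sum (μ := volume) (a := lo) (b := hi)
    (f := fun i φ => ∑ j, a i * f i φ * (a j * f j φ))
    (fun i (_ : i ∈ Finset.univ) => hsum_int i)
  refine Eq.trans h3.symm ?_
  congr 1; ext φ
  rw [sq, Finset.sum_mul_sum]

lemma exists_zero {h : ℝ → ℝ} {lo hi c d : ℝ}
    (hae : ∀ᵐ φ ∂(volume.restrict (Ioc lo hi)), h φ = 0)
    (hcd : c < d) (hsub : Ioo c d ⊆ Ioc lo hi) :
    ∃ φ ∈ Ioo c d, h φ = 0 := by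
  by_contra hcon
  push_neg at hcon
  have hsub2 : Ioo c d ⊆ {φ | ¬ h φ = 0} := fun φ hφ => hcon φ hφ
  have hμ : volume.restrict (Ioc lo hi) {φ | ¬ h φ = 0} = 0 := ae_iff.1 hae
  rw [Measure.restrict_apply' measurableSet_Ioc] at hμ
  have : volume (Ioo c d) = 0 := by
    refine le_antisymm ?_ zero_le
    rw [← hμ]
    exact measure_mono fun φ hφ => ⟨hsub2 hφ, hsub hφ⟩
  rw [Real.volume_Ioo] at this
  have := ENNReal.ofReal_eq_zero.1 this
  linarith

lemma cont_zero {g : ℝ → ℝ} {lo hi : ℝ} (hg : Continuous g)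
    (hae : ∀ᵐ φ ∂(volume.restrict (Ioc lo hi)), g φ = 0) :
    ∀ φ ∈ Ioo lo hi, g φ = 0 := by
  intro φ hφ
  by_contra hne
  have hopen : IsOpen ((g ⁻¹' {0}ᶜ) ∩ Ioo lo hi) :=
    (isOpen_compl_singleton.preimage hg).inter isOpen_Ioo
  have hmem : φ ∈ (g ⁻¹' {0}ᶜ) ∩ Ioo lo hi := ⟨hne, hφ⟩
  rcases Metric.isOpen_iff.1 hopen φ hmem with ⟨ε, hε, hball⟩
  rw [Real.ball_eq_Ioo] at hball
  rcases exists_zero hae (by linarith : φ - ε < φ + ε)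
    (fun ψ hψ => Ioo_subset_Ioc_self (hball hψ).2) with ⟨ψ, hψ1, hψ2⟩
  exact (hball hψ1).1 hψ2

lemma intInt_sq {n : ℕ} (f : Fin n → ℝ → ℝ) (a : Fin n → ℝ) (lo hi : ℝ)
    (hint : ∀ i j, IntervalIntegrable (fun φ => f i φ * f j φ) volume lo hi) :
    IntervalIntegrable (fun φ => (∑ i, a i * f i φ)^2) volume lo hi := by
  have hint' : ∀ i j, IntervalIntegrable (fun φ => (a i * f i φ) * (a j * f j φ)) volume lo hi := by
    intro i j
    have : (fun φ => (a i * f i φ) * (a j * f j φ))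
        = fun φ => (a i * a j) * (f i φ * f j φ) := by ext φ; ring
    rw [this]
    exact (hint i j).const_mul _
  have hsum_int : ∀ i : Fin n,
      IntervalIntegrable (fun φ => ∑ j, a i * f i φ * (a j * f j φ)) volume lo hi := by
    intro i
    have hh := IntervalIntegrable.sum (μ := volume) (a := lo) (b := hi) Finset.univ
      (f := fun j => fun φ => a i * f i φ * (a j * f j φ)) (fun j _ => hint' i j)
    have he : (∑ j : Fin n, fun φ => a i * f i φ * (a j * f j φ))
        = fun φ => ∑ j, a i * f i φ * (a j * f j φ) := by
      ext φ; simp [Finset.sum_apply]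
    rwa [he] at hh
  have hh := IntervalIntegrable.sum (μ := volume) (a := lo) (b := hi) Finset.univ
    (f := fun i => fun φ => ∑ j, a i * f i φ * (a j * f j φ)) (fun i _ => hsum_int i)
  have he : (∑ i : Fin n, fun φ => ∑ j, a i * f i φ * (a j * f j φ))
      = fun φ => (∑ i, a i * f i φ)^2 := by
    ext φ
    rw [sq, Finset.sum_mul_sum]
    simp [Finset.sum_apply]
  rwa [he] at hh

lemma integral_sq_zero_ae {g : ℝ → ℝ} {lo hi : ℝ} (hle : lo ≤ hi)
    (hint : IntervalIntegrable (fun φ => g φ ^ 2) volume lo hi)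
    (h0 : ∫ φ in lo..hi, g φ ^ 2 = 0) :
    ∀ᵐ φ ∂(volume.restrict (Ioc lo hi)), g φ = 0 := by
  rw [intervalIntegral.integral_of_le hle] at h0
  have hint' : IntegrableOn (fun φ => g φ ^ 2) (Ioc lo hi) volume :=
    (intervalIntegrable_iff_integrableOn_Ioc_of_le hle).1 hint
  have hae := (integral_eq_zero_iff_of_nonneg (fun φ => sq_nonneg (g φ)) hint').1 h0
  filter_upwards [hae] with φ hφ
  exact pow_eq_zero_iff two_ne_zero |>.1 hφ

lemma psi_symm (x x' : ℝ) : ntkPsi1 x x' = ntkPsi1 x' x := by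
  unfold ntkPsi1
  rw [mul_comm x x', mul_comm (1 + x^2)]

lemma entry0 (x x' : ℝ) (hx : x ∈ Icc (0:ℝ) 1) (hx' : x' ∈ Icc (0:ℝ) 1) :
    Pi0 x x' = (1/π) * ∫ φ in (-(π/2))..(3*π/2), G0 x φ * G0 x' φ := by
  rcases le_total x' x with h | h
  · rw [int_G0 x x' hx hx' h, Pi0, psi_eq,
      abs_of_nonneg (sub_nonneg.2 (Real.arctan_strictMono.monotone h))]
  · have hcomm : (fun φ => G0 x φ * G0 x' φ) = fun φ => G0 x' φ * G0 x φ := by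
      ext φ; ring
    rw [hcomm, int_G0 x' x hx' hx h, Pi0, psi_eq,
      abs_of_nonpos (sub_nonpos.2 (Real.arctan_strictMono.monotone h))]
    ring

lemma entry1 (x x' : ℝ) (hx : x ∈ Icc (0:ℝ) 1) (hx' : x' ∈ Icc (0:ℝ) 1) :
    Pi1 x x' = (2/π) * ∫ φ in (-(π/2))..(3*π/2), G1 x φ * G1 x' φ := by
  rcases le_total x' x with h | h
  · rw [int_G1 x x' hx hx' h, Pi1, psi_eq,
      abs_of_nonneg (sub_nonneg.2 (Real.arctan_strictMono.monotone h)),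
      abs_of_nonneg (sub_nonneg.2 h)]
    ring
  · have hcomm : (fun φ => G1 x φ * G1 x' φ) = fun φ => G1 x' φ * G1 x φ := by
      ext φ; ring
    rw [hcomm, int_G1 x' x hx' hx h, Pi1, psi_eq,
      abs_of_nonpos (sub_nonpos.2 (Real.arctan_strictMono.monotone h)),
      abs_of_nonpos (sub_nonpos.2 h)]
    ring

lemma ext0 {n : ℕ} {x : Fin n → ℝ} (hx : Function.Injective x)
    (hX : ∀ i, x i ∈ Icc (0:ℝ) 1) (a : Fin n → ℝ)
    (hae : ∀ᵐ φ ∂(volume.restrict (Ioc (-(π/2)) (3*π/2))), (∑ j, a j * G0 (x j) φ) = 0) :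
    ∀ i, a i = 0 := by
  intro i
  have hpi := Real.pi_pos
  have hTinj : Function.Injective (fun j => arctan (x j)) :=
    fun p q h => hx (Real.arctan_injective h)
  have hTm : ∀ j, arctan (x j) ∈ Icc (0:ℝ) (π/4) := fun j => arctan_mem _ (hX j)
  set T : Fin n → ℝ := fun j => arctan (x j) with hT
  set η := Finset.univ.inf' (⟨i, Finset.mem_univ i⟩ : Finset.univ.Nonempty)
    (fun j => if j = i then π/4 else |T j - T i|) with hη
  have hηpos : 0 < η := by
    rw [hη]; refine (Finset.lt_inf'_iff _).2 ?_
    intro j _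
    by_cases hji : j = i
    · rw [if_pos hji]; linarith
    · rw [if_neg hji, abs_pos, sub_ne_zero]
      exact fun h => hji (hTinj h)
  have hη4 : η ≤ π/4 := by
    have h := Finset.inf'_le (fun j => if j = i then π/4 else |T j - T i|) (Finset.mem_univ i)
    rwa [if_pos rfl] at h
  have hηj : ∀ j, j ≠ i → η ≤ |T j - T i| := by
    intro j hj
    have h := Finset.inf'_le (fun j => if j = i then π/4 else |T j - T i|) (Finset.mem_univ j)
    rwa [if_neg hj] at h
  have hTi0 := (hTm i).1
  have hTi4 := (hTm i).2
  obtain ⟨φ₀, hφ₀, hS0⟩ := exists_zero hae (c := T i + π/2 - η) (d := T i + π/2)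
    (by linarith) (fun φ hφ => ⟨by linarith [hφ.1], by linarith [hφ.2]⟩)
  obtain ⟨φ₁, hφ₁, hS1⟩ := exists_zero hae (c := T i + π/2) (d := T i + π/2 + η)
    (by linarith) (fun φ hφ => ⟨by linarith [hφ.1], by linarith [hφ.2]⟩)
  have hmem0 : φ₀ ∈ Icc (-(π/2)) (3*π/2) := ⟨by linarith [hφ₀.1], by linarith [hφ₀.2]⟩
  have hmem1 : φ₁ ∈ Icc (-(π/2)) (3*π/2) := ⟨by linarith [hφ₁.1], by linarith [hφ₁.2]⟩
  have key : ∀ j, a j * G0 (x j) φ₀ - a j * G0 (x j) φ₁ = if j = i then a i else 0 := by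
    intro j
    have hTj0 := (hTm j).1
    have hTj4 := (hTm j).2
    by_cases hji : j = i
    · subst hji
      have e0 : G0 (x j) φ₀ = 1 := by
        unfold G0
        rw [if_pos]
        rw [pos_iff (x j) (hX j) φ₀ hmem0]
        exact ⟨by linarith [hφ₀.1], hφ₀.2⟩
      have e1 : G0 (x j) φ₁ = 0 := by
        unfold G0
        rw [if_neg]
        rw [pos_iff (x j) (hX j) φ₁ hmem1]
        push_neg
        intro _
        linarith [hφ₁.1]
      rw [e0, e1, if_pos rfl]
      ring
    · have hTne : T j ≠ T i := fun h => hji (hTinj h)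
      have heq : G0 (x j) φ₀ = G0 (x j) φ₁ := by
        rcases lt_or_gt_of_ne hTne with hlt | hgt
        · have hle : T j ≤ T i - η := by
            have := hηj j hji
            rw [abs_of_neg (by linarith)] at this
            linarith
          have e0 : G0 (x j) φ₀ = 0 := by
            unfold G0; rw [if_neg]
            rw [pos_iff (x j) (hX j) φ₀ hmem0]
            push_neg
            intro _
            linarith [hφ₀.1]
          have e1 : G0 (x j) φ₁ = 0 := by
            unfold G0; rw [if_neg]
            rw [pos_iff (x j) (hX j) φ₁ hmem1]
            push_neg
            intro _
            linarith [hφ₁.1]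
          rw [e0, e1]
        · have hge : T i + η ≤ T j := by
            have := hηj j hji
            rw [abs_of_pos (by linarith)] at this
            linarith
          have e0 : G0 (x j) φ₀ = 1 := by
            unfold G0; rw [if_pos]
            rw [pos_iff (x j) (hX j) φ₀ hmem0]
            exact ⟨by linarith [hφ₀.1], by linarith [hφ₀.2]⟩
          have e1 : G0 (x j) φ₁ = 1 := by
            unfold G0; rw [if_pos]
            rw [pos_iff (x j) (hX j) φ₁ hmem1]
            exact ⟨by linarith [hφ₁.1], by linarith [hφ₁.2]⟩
          rw [e0, e1]
      rw [heq, if_neg hji]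
      ring
  have hsum : ∑ j, (a j * G0 (x j) φ₀ - a j * G0 (x j) φ₁) = a i := by
    rw [Finset.sum_congr rfl (fun j _ => key j)]
    simp
  rw [Finset.sum_sub_distrib, hS0, hS1] at hsum
  simpa using hsum.symm

lemma ext1 {n : ℕ} {x : Fin n → ℝ} (hx : Function.Injective x)
    (hX : ∀ i, x i ∈ Icc (0:ℝ) 1) (a : Fin n → ℝ)
    (hae : ∀ᵐ φ ∂(volume.restrict (Ioc (-(π/2)) (3*π/2))), (∑ j, a j * G1 (x j) φ) = 0) :
    ∀ i, a i = 0 := by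
  have hpi := Real.pi_pos
  have hcont : Continuous (fun φ => ∑ j, a j * G1 (x j) φ) :=
    continuous_finset_sum _ (fun j _ => continuous_const.mul (G1_cont (x j)))
  have hz := cont_zero hcont hae
  have hsum : ∑ j, a j = 0 := by
    have h0 := hz 0 ⟨by linarith, by linarith⟩
    have : ∀ j : Fin n, G1 (x j) 0 = 1 := by
      intro j
      unfold G1
      rw [Real.cos_zero, Real.sin_zero, mul_zero, add_zero]
      exact max_eq_right zero_le_one
    simpa [this] using h0
  have hS : ∀ v : ℝ, 0 ≤ v → ∑ j, a j * max 0 (x j - v) = 0 := by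
    intro v hv
    rcases le_or_gt v 1 with hv1 | hv1
    · have hu := arctan_mem v ⟨hv, hv1⟩
      have hφ : arctan v + π/2 ∈ Ioo (-(π/2)) (3*π/2) :=
        ⟨by linarith [hu.1], by linarith [hu.2]⟩
      have h := hz _ hφ
      have hcv : 0 < Real.cos (arctan v) := Real.cos_arctan_pos v
      have hkey : ∀ j : Fin n, G1 (x j) (arctan v + π/2)
          = Real.cos (arctan v) * max 0 (x j - v) := by
        intro j
        unfold G1
        rw [Real.cos_add_pi_div_two, Real.sin_add_pi_div_two]
        have hsv : Real.sin (arctan v) = v * Real.cos (arctan v) := by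
          rw [Real.sin_arctan, Real.cos_arctan]; ring
        rw [hsv, mul_max_of_nonneg _ _ hcv.le, mul_zero]
        congr 1
        ring
      simp only [hkey] at h
      have h2 : Real.cos (arctan v) * ∑ j, a j * max 0 (x j - v)
          = ∑ j, a j * (Real.cos (arctan v) * max 0 (x j - v)) := by
        rw [Finset.mul_sum]
        apply Finset.sum_congr rfl
        intro j _
        ring
      have h3 := h2.trans h
      rcases mul_eq_zero.1 h3 with hc | hs
      · exact absurd hc hcv.ne'
      · exact hs
    · apply Finset.sum_eq_zero
      intro j _
      have := (hX j).2
      rw [max_eq_left (by linarith)]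
      ring
  have hpos : ∀ i, 0 < x i → a i = 0 := by
    intro i hxi
    set ε := Finset.univ.inf' (⟨i, Finset.mem_univ i⟩ : Finset.univ.Nonempty)
      (fun j => if j = i then x i else |x j - x i|) with hε
    have hεpos : 0 < ε := by
      rw [hε]; refine (Finset.lt_inf'_iff _).2 ?_
      intro j _
      by_cases hji : j = i
      · rw [if_pos hji]; exact hxi
      · rw [if_neg hji, abs_pos, sub_ne_zero]
        exact fun h => hji (hx h)
    have hεi : ε ≤ x i := by
      have h := Finset.inf'_le (fun j => if j = i then x i else |x j - x i|) (Finset.mem_univ i)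
      rwa [if_pos rfl] at h
    have hεj : ∀ j, j ≠ i → ε ≤ |x j - x i| := by
      intro j hj
      have h := Finset.inf'_le (fun j => if j = i then x i else |x j - x i|) (Finset.mem_univ j)
      rwa [if_neg hj] at h
    have E := hS (x i - ε) (by linarith)
    have F := hS (x i) hxi.le
    have G := hS (x i + ε) (by linarith)
    have t1 : ∑ j, (a j * max 0 (x j - (x i - ε)) - 2*(a j * max 0 (x j - x i))
        + a j * max 0 (x j - (x i + ε))) = 0 := by
      rw [Finset.sum_add_distrib, Finset.sum_sub_distrib, ← Finset.mul_sum, E, F, G]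
      ring
    have t2 : ∑ j, (a j * max 0 (x j - (x i - ε)) - 2*(a j * max 0 (x j - x i))
        + a j * max 0 (x j - (x i + ε))) = a i * ε := by
      rw [Finset.sum_eq_single i]
      · rw [show x i - (x i - ε) = ε by ring, show x i - (x i + ε) = -ε by ring, sub_self,
          max_self, max_eq_left (by linarith : -ε ≤ (0:ℝ)), max_eq_right hεpos.le]
        ring
      · intro j _ hji
        have hne : x j ≠ x i := fun h => hji (hx h)
        rcases lt_or_gt_of_ne hne with hlt | hgt
        · have hle : x j ≤ x i - ε := by
            have := hεj j hji
            rw [abs_of_neg (by linarith)] at this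
            linarith
          rw [max_eq_left (by linarith), max_eq_left (by linarith), max_eq_left (by linarith)]
          ring
        · have hge : x i + ε ≤ x j := by
            have := hεj j hji
            rw [abs_of_pos (by linarith)] at this
            linarith
          rw [max_eq_right (by linarith), max_eq_right (by linarith),
            max_eq_right (by linarith)]
          ring
      · intro h
        exact absurd (Finset.mem_univ i) h
    rw [t2] at t1
    rcases mul_eq_zero.1 t1 with h | h
    · exact h
    · exact absurd h hεpos.ne'
  intro i
  rcases lt_or_ge 0 (x i) with h | h
  · exact hpos i h
  · have hx0 : x i = 0 := le_antisymm h (hX i).1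
    have hothers : ∀ j, j ≠ i → a j = 0 := by
      intro j hj
      apply hpos j
      rcases (hX j).1.lt_or_eq with h2 | h2
      · exact h2
      · exact absurd (hx (by rw [← h2, hx0])) hj
    have := Finset.sum_eq_single i (fun j _ hj => hothers j hj)
      (fun h => absurd (Finset.mem_univ i) h)
    rw [this] at hsum
    exact hsum

/-- **Positive definiteness of `Π₀` and `Π₁` on `[0,1]`.**  For pairwise distinct points
`x₁,…,xₙ ∈ [0,1]`, the Gram matrices of `Π₀` and `Π₁` are positive definite. -/
theorem Pi0_Pi1_gram_posDef (n : ℕ) (x : Fin n → ℝ) (hx : Function.Injective x)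
    (hX : ∀ i, x i ∈ Set.Icc (0 : ℝ) 1) :
    (Matrix.of fun i j => Pi0 (x i) (x j)).PosDef ∧
    (Matrix.of fun i j => Pi1 (x i) (x j)).PosDef := by
  have hpi := Real.pi_pos
  have hwin : -(π/2) ≤ 3*π/2 := by linarith
  constructor
  · rw [Matrix.posDef_iff_dotProduct_mulVec]
    constructor
    · show _ = _
      ext i j
      simp only [Matrix.conjTranspose_apply, Matrix.of_apply, star_trivial]
      rw [Pi0, Pi0, psi_symm]
    · intro a ha
      have hform : dotProduct (star a) ((Matrix.of fun i j => Pi0 (x i) (x j)) *ᵥ a)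
          = ∑ i, ∑ j, a i * a j * Pi0 (x i) (x j) := by
        simp only [dotProduct, Matrix.mulVec, Pi.star_apply, star_trivial,
          Matrix.of_apply]
        apply Finset.sum_congr rfl
        intro i _
        rw [Finset.mul_sum]
        apply Finset.sum_congr rfl
        intro j _
        ring
      rw [hform]
      have hstep : ∑ i, ∑ j, a i * a j * Pi0 (x i) (x j)
          = (1/π) * ∑ i, ∑ j, a i * a j *
            ∫ φ in (-(π/2))..(3*π/2), G0 (x i) φ * G0 (x j) φ := by
        rw [Finset.mul_sum]
        apply Finset.sum_congr rfl
        intro i _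
        rw [Finset.mul_sum]
        apply Finset.sum_congr rfl
        intro j _
        rw [entry0 _ _ (hX i) (hX j)]
        ring
      rw [hstep, quad n (fun i => G0 (x i)) a _ _ (fun i j => intInt_G0 (x i) (x j) _ _)]
      apply mul_pos (by positivity)
      have hnn := intervalIntegral.integral_nonneg (μ := volume) hwin
        (fun φ _ => sq_nonneg (∑ i, a i * G0 (x i) φ))
      rcases hnn.lt_or_eq with hlt | heq
      · exact hlt
      · exfalso
        have hae := integral_sq_zero_ae hwin
          (intInt_sq (fun i => G0 (x i)) a _ _ (fun i j => intInt_G0 (x i) (x j) _ _)) heq.symm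
        exact ha (funext (ext0 hx hX a hae))
  · rw [Matrix.posDef_iff_dotProduct_mulVec]
    constructor
    · show _ = _
      ext i j
      simp only [Matrix.conjTranspose_apply, Matrix.of_apply, star_trivial]
      rw [Pi1, Pi1, psi_symm, mul_comm (x j) (x i), abs_sub_comm]
    · intro a ha
      have hform : dotProduct (star a) ((Matrix.of fun i j => Pi1 (x i) (x j)) *ᵥ a)
          = ∑ i, ∑ j, a i * a j * Pi1 (x i) (x j) := by
        simp only [dotProduct, Matrix.mulVec, Pi.star_apply, star_trivial,
          Matrix.of_apply]
        apply Finset.sum_congr rfl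
        intro i _
        rw [Finset.mul_sum]
        apply Finset.sum_congr rfl
        intro j _
        ring
      rw [hform]
      have hstep : ∑ i, ∑ j, a i * a j * Pi1 (x i) (x j)
          = (2/π) * ∑ i, ∑ j, a i * a j *
            ∫ φ in (-(π/2))..(3*π/2), G1 (x i) φ * G1 (x j) φ := by
        rw [Finset.mul_sum]
        apply Finset.sum_congr rfl
        intro i _
        rw [Finset.mul_sum]
        apply Finset.sum_congr rfl
        intro j _
        rw [entry1 _ _ (hX i) (hX j)]
        ring
      rw [hstep, quad n (fun i => G1 (x i)) a _ _ (fun i j => intInt_G1 (x i) (x j) _ _)]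
      apply mul_pos (by positivity)
      have hnn := intervalIntegral.integral_nonneg (μ := volume) hwin
        (fun φ _ => sq_nonneg (∑ i, a i * G1 (x i) φ))
      rcases hnn.lt_or_eq with hlt | heq
      · exact hlt
      · exfalso
        have hae := integral_sq_zero_ae hwin
          (intInt_sq (fun i => G1 (x i)) a _ _ (fun i j => intInt_G1 (x i) (x j) _ _)) heq.symm
        exact ha (funext (ext1 hx hX a hae))
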